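/- If θ* ∈ ℝ^d satisfies ∇J(θ*) = 0 (i.e., θ* is a stationary point of the expected return), then θ* is a critical point of the map θ ↦ KL(Rπ_{θ*} ‖ π_θ); that is, the gradient of this map at θ = θ* is zero. Hence the optimal policy π_{θ*} is a fixed point of the composition of the improvement operator I_τ : π ↦ Rπ and the KL projection onto the parameterized policy class. -/

import Mathlib

/-- Expected return `J(π) = ∑ τ, R τ * π τ`. -/
noncomputable def Jexp {T : Type*} [Fintype T] (R π : T → ℝ) : ℝ := ∑ τ, R τ * π τ

/-- Improved policy `Rπ(τ) = R τ * π τ / J(π)`. -/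
noncomputable def impPolicy {T : Type*} [Fintype T] (R π : T → ℝ) (τ : T) : ℝ :=
  R τ * π τ / Jexp R π

/-- KL divergence between pmfs on a finite type (with `0 * log 0 = 0`). -/
noncomputable def klDiv {T : Type*} [Fintype T] (p q : T → ℝ) : ℝ :=
  ∑ τ, p τ * Real.log (p τ / q τ)

/-- If `θ*` is a stationary point of the expected return `J`, then `θ*` is a critical point
of `θ ↦ KL(Rπ_{θ*} ‖ π_θ)`: the optimal policy is a fixed point of the composition of the
improvement operator `I_τ : π ↦ Rπ` and the KL projection onto the policy class. -/
theorem fixed_point_operator_reinforce_trajectory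
    {T : Type*} [Fintype T] [Nonempty T] {d : ℕ}
    (R : T → ℝ) (hR : ∀ τ, 0 < R τ)
    (π : EuclideanSpace ℝ (Fin d) → T → ℝ)
    (hπpos : ∀ θ τ, 0 < π θ τ)
    (hπsum : ∀ θ, ∑ τ, π θ τ = 1)
    (hπdiff : ∀ τ, Differentiable ℝ (fun θ => π θ τ))
    (θs : EuclideanSpace ℝ (Fin d))
    (hstat : gradient (fun θ => Jexp R (π θ)) θs = 0) :
    gradient (fun θ => klDiv (impPolicy R (π θs)) (π θ)) θs = 0 := by
  classical
  set p := impPolicy R (π θs) with hp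
  set D : T → (EuclideanSpace ℝ (Fin d)) →L[ℝ] ℝ :=
    fun τ => fderiv ℝ (fun θ => π θ τ) θs with hD
  have hJpos : 0 < Jexp R (π θs) :=
    Finset.sum_pos (fun τ _ => mul_pos (hR τ) (hπpos θs τ)) Finset.univ_nonempty
  have hppos : ∀ τ, 0 < p τ := fun τ =>
    div_pos (mul_pos (hR τ) (hπpos θs τ)) hJpos
  -- derivative of J
  have hJ : HasFDerivAt (fun θ => Jexp R (π θ)) (∑ τ, R τ • D τ) θs := by
    simpa [Jexp] using
      HasFDerivAt.fun_sum (fun τ (_ : τ ∈ Finset.univ) =>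
        ((hπdiff τ θs).hasFDerivAt.const_mul (R τ)))
  have hgradJ : HasGradientAt (fun θ => Jexp R (π θ))
      ((InnerProductSpace.toDual ℝ (EuclideanSpace ℝ (Fin d))).symm (∑ τ, R τ • D τ)) θs := by
    rw [hasGradientAt_iff_hasFDerivAt]
    simpa using hJ
  have hsum0 : (∑ τ, R τ • D τ) = 0 := by
    have h := hgradJ.gradient
    rw [hstat] at h
    have := congrArg (InnerProductSpace.toDual ℝ (EuclideanSpace ℝ (Fin d))) h.symm
    simpa using this
  -- derivative of the KL map
  have hKL : HasFDerivAt (fun θ => klDiv p (π θ))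
      (∑ τ, (-(p τ * (π θs τ)⁻¹)) • D τ) θs := by
    unfold klDiv
    apply HasFDerivAt.fun_sum
    intro τ _
    have h1 : HasFDerivAt (fun θ => Real.log (π θ τ)) ((π θs τ)⁻¹ • D τ) θs :=
      ((hπdiff τ θs).hasFDerivAt).log (ne_of_gt (hπpos θs τ))
    have heq : (fun θ => p τ * Real.log (p τ / π θ τ))
        = fun θ => p τ * Real.log (p τ) - p τ * Real.log (π θ τ) := by
      funext θ
      rw [Real.log_div (ne_of_gt (hppos τ)) (ne_of_gt (hπpos θ τ))]
      ring
    rw [heq]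
    have h2 := (hasFDerivAt_const (p τ * Real.log (p τ)) θs).fun_sub (h1.const_mul (p τ))
    convert h2 using 1
    rw [zero_sub, smul_smul]
    exact neg_smul _ _
  have hzero : (∑ τ, (p τ * (π θs τ)⁻¹) • D τ) = 0 := by
    have hτ : ∀ τ, (p τ * (π θs τ)⁻¹) • D τ = (Jexp R (π θs))⁻¹ • (R τ • D τ) := by
      intro τ
      rw [smul_smul]
      congr 1
      rw [hp]
      unfold impPolicy
      rw [div_mul_eq_mul_div, mul_assoc, mul_inv_cancel₀ (ne_of_gt (hπpos θs τ)), mul_one,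
        div_eq_inv_mul]
    rw [Finset.sum_congr rfl (fun τ _ => hτ τ), ← Finset.smul_sum, hsum0, smul_zero]
  have hgradKL : HasGradientAt (fun θ => klDiv p (π θ)) 0 θs := by
    rw [hasGradientAt_iff_hasFDerivAt]
    have h0 : (∑ τ, (-(p τ * (π θs τ)⁻¹)) • D τ) = 0 := by
      have hn : ∀ τ, (-(p τ * (π θs τ)⁻¹)) • D τ = -((p τ * (π θs τ)⁻¹) • D τ) :=
        fun τ => neg_smul (R := ℝ) (M := EuclideanSpace ℝ (Fin d) →L[ℝ] ℝ) _ _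
      rw [Finset.sum_congr rfl (fun τ _ => hn τ), Finset.sum_neg_distrib, hzero, neg_zero]
    rw [h0] at hKL
    simpa using hKL
  exact hgradKL.gradient
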